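/- For integers d ≥ 2 and n ≥ 1, the quantity η(d,n)^{-(d+1)} satisfies e·d·n^d ≤ η(d,n)^{-(d+1)} ≤ 32e·d·n^d, where η(d,n) is the maximum of f_{d,n}(r) = (r - r^d)/(r^{d+1}+n)^{d/(d+1)} over r ≥ 0. -/

import Mathlib

private lemma aux_id (k : ℕ) (K K1 N T X u r A : ℝ)
    (hstar : N * u = K * T * X) (hA : A = K1 * T * X) (hT : T = r ^ k) :
    A ^ (k+1) * (K^(k+1) * (T * r^2) * u) = K1^(k+1) * N^(k+1) * (r*u)^(k+1+1) := by
  subst hA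
  calc (K1*T*X)^(k+1) * (K^(k+1)*(T*r^2)*u)
      = K1^(k+1) * ((K*T*X)^(k+1)) * (T*r^2*u) := by ring
    _ = K1^(k+1) * ((N*u)^(k+1)) * (T*r^2*u) := by rw [hstar]
    _ = K1^(k+1) * N^(k+1) * (r^k * r^2 * u^(k+1) * u) := by rw [hT]; ring
    _ = K1^(k+1) * N^(k+1) * (r*u)^(k+1+1) := by ring

set_option maxHeartbeats 2000000 in
/-- Bounds `e d n^d ≤ η(d,n)^{-(d+1)} ≤ 32 e d n^d`, where `η(d,n)` is the maximum of
`f_{d,n}(r) = (r - r^d)/(r^(d+1)+n)^(d/(d+1))` over `r ≥ 0`, attained at the unique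
positive root `ρ` of `(d-1)ρ^(d+1) + d n ρ^(d-1) - n = 0`. -/
theorem eta_inv_bounds (d n : ℕ) (hd : 2 ≤ d) (hn : 1 ≤ n) (ρ : ℝ) (hρ : 0 < ρ)
    (heq : ((d : ℝ) - 1) * ρ ^ (d + 1) + (d : ℝ) * (n : ℝ) * ρ ^ (d - 1) - (n : ℝ) = 0) :
    Real.exp 1 * (d : ℝ) * (n : ℝ) ^ d ≤
        (((ρ - ρ ^ d) / (ρ ^ (d + 1) + (n : ℝ)) ^ ((d : ℝ) / ((d : ℝ) + 1)))⁻¹) ^ (d + 1) ∧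
    (((ρ - ρ ^ d) / (ρ ^ (d + 1) + (n : ℝ)) ^ ((d : ℝ) / ((d : ℝ) + 1)))⁻¹) ^ (d + 1) ≤
        32 * Real.exp 1 * (d : ℝ) * (n : ℝ) ^ d := by
  obtain ⟨k, rfl⟩ : ∃ k, d = k + 1 := ⟨d - 1, by omega⟩
  have hk : 1 ≤ k := by omega
  have hk0 : (0:ℝ) < k := by exact_mod_cast Nat.lt_of_lt_of_le Nat.zero_lt_one hk
  have hn0 : (0:ℝ) < n := by exact_mod_cast hn
  have hn1 : (1:ℝ) ≤ n := by exact_mod_cast hn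
  simp only [Nat.add_sub_cancel] at heq
  push_cast at heq ⊢
  have ht0 : 0 < ρ ^ k := pow_pos hρ k
  have key1 : (n:ℝ) * (1 - ((k:ℝ)+1)*ρ^k) = (k:ℝ) * ρ^(k+1+1) := by
    linear_combination -heq
  have hr2 : ρ^(k+1+1) = ρ^k * ρ^2 := by ring
  have hdt : ((k:ℝ)+1) * ρ^k < 1 := by
    nlinarith [mul_pos (mul_pos hk0 ht0) (mul_pos hρ hρ), sq_nonneg ρ]
  have ht1 : ρ^k < 1 := by nlinarith
  have hρ1 : ρ < 1 := by
    by_contra h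
    push_neg at h
    have : (1:ℝ) ≤ ρ^k := one_le_pow₀ h
    linarith
  have key2 : 1 ≤ (2*(k:ℝ)+1) * ρ^k := by
    have h1 : 1 - ((k:ℝ)+1)*ρ^k ≤ (k:ℝ)*ρ^k*ρ^2 := by
      nlinarith [key1, hr2, mul_nonneg (by linarith : (0:ℝ) ≤ (n:ℝ)-1)
        (by linarith : (0:ℝ) ≤ 1 - ((k:ℝ)+1)*ρ^k)]
    have hρsq : ρ^2 ≤ 1 := by nlinarith
    have h2 : (k:ℝ)*ρ^k*ρ^2 ≤ (k:ℝ)*ρ^k := by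
      nlinarith [mul_nonneg (mul_pos hk0 ht0).le (by linarith : (0:ℝ) ≤ 1 - ρ^2)]
    linarith
  have star : (n:ℝ) * (1 - ρ^k) = (k:ℝ) * ρ^k * (ρ^2 + n) := by
    rw [hr2] at key1; linear_combination key1
  have keyA : ρ^(k+1+1) + n = ((k:ℝ)+1) * ρ^k * (ρ^2 + n) := by
    rw [hr2]; linear_combination star
  have hA0 : (0:ℝ) < ρ^(k+1+1) + n := by positivity
  have hP : ρ - ρ^(k+1) = ρ * (1 - ρ^k) := by ring
  have hP0 : (0:ℝ) < ρ - ρ^(k+1) := by rw [hP]; have := ht1; nlinarith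
  have hc : ((k:ℝ)+1) / ((k:ℝ)+1+1) * ((k+1+1 : ℕ) : ℝ) = ((k+1 : ℕ) : ℝ) := by
    have h2 : ((k:ℝ)+1+1) ≠ 0 := by positivity
    push_cast
    field_simp
  have hE : (((ρ - ρ^(k+1)) / (ρ^(k+1+1) + (n:ℝ)) ^ (((k:ℝ)+1) / ((k:ℝ)+1+1)))⁻¹) ^ (k+1+1)
      = (ρ^(k+1+1) + (n:ℝ))^(k+1) / (ρ - ρ^(k+1))^(k+1+1) := by
    rw [inv_div, div_pow,
      ← Real.rpow_natCast ((ρ^(k+1+1) + (n:ℝ)) ^ (((k:ℝ)+1) / ((k:ℝ)+1+1))) (k+1+1),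
      ← Real.rpow_mul hA0.le, hc, Real.rpow_natCast]
  rw [hE]
  have hID : (ρ^(k+1+1) + (n:ℝ))^(k+1) * ((k:ℝ)^(k+1) * ρ^(k+1+1) * (1-ρ^k))
      = ((k:ℝ)+1)^(k+1) * (n:ℝ)^(k+1) * (ρ - ρ^(k+1))^(k+1+1) := by
    have := aux_id k (k:ℝ) ((k:ℝ)+1) (n:ℝ) (ρ^k) (ρ^2+(n:ℝ)) (1-ρ^k) ρ
      (ρ^(k+1+1) + (n:ℝ)) star keyA rfl
    rw [← hr2] at this
    rw [this, hP]
  have hD0 : (0:ℝ) < (k:ℝ)^(k+1) * ρ^(k+1+1) * (1-ρ^k) := by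
    apply mul_pos (mul_pos (pow_pos hk0 _) (pow_pos hρ _))
    linarith
  have hEval : (ρ^(k+1+1) + (n:ℝ))^(k+1) / (ρ - ρ^(k+1))^(k+1+1)
      = ((k:ℝ)+1)^(k+1) * (n:ℝ)^(k+1) / ((k:ℝ)^(k+1) * ρ^(k+1+1) * (1-ρ^k)) := by
    rw [div_eq_div_iff (by positivity) (ne_of_gt hD0)]
    linear_combination hID
  rw [hEval]
  have hρsq : ρ^2 ≤ 1 := by nlinarith
  have hek : Real.exp 1 * (k:ℝ)^(k+1) ≤ ((k:ℝ)+1)^(k+1) := by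
    have h0 : (0:ℝ) < (k:ℝ)+1 := by positivity
    have ha : (k:ℝ) ≤ ((k:ℝ)+1) * Real.exp (-(1/((k:ℝ)+1))) := by
      have he := Real.add_one_le_exp (-(1/((k:ℝ)+1)))
      have hid : ((k:ℝ)+1) * (-(1/((k:ℝ)+1)) + 1) = (k:ℝ) := by field_simp; ring
      nlinarith [mul_le_mul_of_nonneg_left he h0.le]
    have hb : (k:ℝ)^(k+1) ≤ ((k:ℝ)+1)^(k+1) * Real.exp (-(1/((k:ℝ)+1)))^(k+1) := by
      calc (k:ℝ)^(k+1) ≤ (((k:ℝ)+1) * Real.exp (-(1/((k:ℝ)+1))))^(k+1) :=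
            pow_le_pow_left₀ (Nat.cast_nonneg k) ha _
        _ = ((k:ℝ)+1)^(k+1) * Real.exp (-(1/((k:ℝ)+1)))^(k+1) := mul_pow _ _ _
    have hexp : Real.exp (-(1/((k:ℝ)+1)))^(k+1) = Real.exp (-1) := by
      rw [← Real.exp_nat_mul]
      congr 1
      push_cast
      field_simp
    rw [hexp] at hb
    have := Real.exp_pos 1
    have hee : Real.exp 1 * Real.exp (-1) = 1 := by
      rw [← Real.exp_add]; norm_num
    have h2 := mul_le_mul_of_nonneg_left hb (Real.exp_pos 1).le
    have h3 : Real.exp 1 * (((k:ℝ)+1)^(k+1) * Real.exp (-1)) = ((k:ℝ)+1)^(k+1) := by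
      rw [show Real.exp 1 * (((k:ℝ)+1)^(k+1) * Real.exp (-1))
          = (Real.exp 1 * Real.exp (-1)) * ((k:ℝ)+1)^(k+1) from by ring, hee, one_mul]
    linarith
  have core_L : Real.exp 1 * (k:ℝ)^(k+1) * ρ^(k+1+1) * (1-ρ^k) ≤ ((k:ℝ)+1)^k := by
    have hb : ρ^2*(1-ρ^k) ≤ 1 := by nlinarith
    calc Real.exp 1 * (k:ℝ)^(k+1) * ρ^(k+1+1) * (1-ρ^k)
        = (Real.exp 1 * (k:ℝ)^(k+1) * ρ^k) * (ρ^2*(1-ρ^k)) := by rw [hr2]; ring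
      _ ≤ (Real.exp 1 * (k:ℝ)^(k+1) * ρ^k) * 1 := by
          apply mul_le_mul_of_nonneg_left hb
          positivity
      _ = (Real.exp 1 * (k:ℝ)^(k+1)) * ρ^k := by ring
      _ ≤ ((k:ℝ)+1)^(k+1) * ρ^k := mul_le_mul_of_nonneg_right hek ht0.le
      _ = ((k:ℝ)+1)^k * (((k:ℝ)+1)*ρ^k) := by ring
      _ ≤ ((k:ℝ)+1)^k * 1 := by
          apply mul_le_mul_of_nonneg_left hdt.le
          positivity
      _ = ((k:ℝ)+1)^k := mul_one _
  have core_U : ((k:ℝ)+1)^k ≤ 32 * Real.exp 1 * ((k:ℝ)^(k+1) * ρ^(k+1+1) * (1-ρ^k)) := by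
    rcases Nat.lt_or_ge k 3 with h3 | h3
    · interval_cases k
      · -- k = 1
        norm_num at key2 hdt ⊢
        have he := Real.exp_one_gt_d9
        have hq : (2:ℝ)/81 ≤ ρ^(1+1+1)*(1-ρ) := by
          nlinarith [mul_nonneg (by linarith : (0:ℝ) ≤ 3*ρ-1) (by linarith : (0:ℝ) ≤ 1-2*ρ),
            sq_nonneg ρ, sq_nonneg (ρ-1/3), hρ.le]
        nlinarith [mul_le_mul he.le hq (by norm_num) (Real.exp_pos 1).le]
      · -- k = 2
        norm_num at key2 hdt ⊢
        have he := Real.exp_one_gt_d9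
        have hq : (4:ℝ)/125 ≤ ρ^(2+1+1)*(1-ρ^2) := by
          nlinarith [mul_nonneg (by linarith : (0:ℝ) ≤ 5*ρ^2-1) (by linarith : (0:ℝ) ≤ 1-3*ρ^2),
            sq_nonneg ρ, sq_nonneg (ρ^2-1/5)]
        nlinarith [mul_le_mul he.le hq (by norm_num) (Real.exp_pos 1).le]
    · -- k ≥ 3
      have hY : (0:ℝ) ≤ (1-ρ^k)^k := pow_nonneg (by linarith) k
      have hBnn : (0:ℝ) ≤ 32 * Real.exp 1 * ((k:ℝ)^(k+1) * ρ^(k+1+1) * (1-ρ^k)) := by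
        apply mul_nonneg (by positivity)
        apply mul_nonneg (by positivity)
        linarith
      have u1 : (1:ℝ) ≤ (2*(k:ℝ)+1)^(k+1+1) * (ρ^(k+1+1))^k := by
        calc (1:ℝ) ≤ ((2*(k:ℝ)+1) * ρ^k)^(k+1+1) := one_le_pow₀ key2
          _ = (2*(k:ℝ)+1)^(k+1+1) * (ρ^(k+1+1))^k := by rw [mul_pow, pow_right_comm]
      have u2 : (k:ℝ)^k ≤ (((k:ℝ)+1) * (1-ρ^k))^k := by
        apply pow_le_pow_left₀ hk0.le
        nlinarith [hdt]
      have u3 : ((k:ℝ)+1)^(k*(k+1+1)) ≤ (k:ℝ)^(k*(k+1+1)) * Real.exp 1 ^(k+1+1) := by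
        have ha : (k:ℝ)+1 ≤ (k:ℝ) * Real.exp (1/(k:ℝ)) := by
          have he := Real.add_one_le_exp (1/(k:ℝ))
          have hid : (k:ℝ) * (1/(k:ℝ) + 1) = (k:ℝ)+1 := by
            field_simp
            ring
          nlinarith [mul_le_mul_of_nonneg_left he hk0.le]
        have hexp : Real.exp (1/(k:ℝ))^k = Real.exp 1 := by
          rw [← Real.exp_nat_mul]
          congr 1
          field_simp
        calc ((k:ℝ)+1)^(k*(k+1+1)) ≤ ((k:ℝ) * Real.exp (1/(k:ℝ)))^(k*(k+1+1)) :=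
              pow_le_pow_left₀ (by positivity) ha _
          _ = (k:ℝ)^(k*(k+1+1)) * (Real.exp (1/(k:ℝ))^k)^(k+1+1) := by
              rw [mul_pow, ← pow_mul]
          _ = (k:ℝ)^(k*(k+1+1)) * Real.exp 1 ^ (k+1+1) := by rw [hexp]
      have u4 : (2*(k:ℝ)+1)^(k+1+1) * Real.exp 1 ^2 ≤ 32^k * ((k:ℝ)+1)^k := by
        have hkp : ((k:ℝ)+1)^2 ≤ 4^k := by
          have h1 : (k:ℝ)+1 ≤ 2^k := by
            have := k.lt_two_pow_self
            exact_mod_cast Nat.succ_le_of_lt this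
          calc ((k:ℝ)+1)^2 ≤ ((2:ℝ)^k)^2 := pow_le_pow_left₀ (by positivity) h1 2
            _ = 4^k := by rw [← pow_mul, show (4:ℝ) = 2^2 from by norm_num, ← pow_mul,
                Nat.mul_comm]
        have he2 : Real.exp 1 ^2 ≤ 8 := by nlinarith [Real.exp_one_lt_d9, Real.exp_pos 1]
        have h21 : ((2*(k:ℝ)+1))^(k+1+1) ≤ (2*((k:ℝ)+1))^(k+1+1) :=
          pow_le_pow_left₀ (by positivity) (by linarith) _
        have hpow : (2:ℝ)^(k+1+1) * 4^k * 8 ≤ 32^k := by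
          rw [show (8:ℝ) = 2^3 from by norm_num, show (4:ℝ) = 2^2 from by norm_num,
            show (32:ℝ) = 2^5 from by norm_num, ← pow_mul, ← pow_mul, ← pow_add, ← pow_add]
          apply pow_le_pow_right₀ (by norm_num)
          omega
        calc (2*(k:ℝ)+1)^(k+1+1) * Real.exp 1 ^2
            ≤ (2*((k:ℝ)+1))^(k+1+1) * 8 := by
              apply mul_le_mul h21 he2 (by positivity) (by positivity)
          _ = ((k:ℝ)+1)^k * (((k:ℝ)+1)^2 * ((2:ℝ)^(k+1+1) * 8)) := by
              rw [mul_pow]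
              rw [show k+1+1 = k+2 from rfl, pow_add ((k:ℝ)+1) k 2]
              ring
          _ ≤ ((k:ℝ)+1)^k * ((4:ℝ)^k * ((2:ℝ)^(k+1+1) * 8)) := by
              apply mul_le_mul_of_nonneg_left _ (by positivity)
              apply mul_le_mul_of_nonneg_right hkp (by positivity)
          _ = ((k:ℝ)+1)^k * ((2:ℝ)^(k+1+1) * 4^k * 8) := by ring
          _ ≤ ((k:ℝ)+1)^k * 32^k := by
              apply mul_le_mul_of_nonneg_left hpow (by positivity)
          _ = 32^k * ((k:ℝ)+1)^k := mul_comm _ _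
      have u5 : Real.exp 1 ^2 ≤ 32^k * ((k:ℝ)+1)^k * (ρ^(k+1+1))^k := by
        calc Real.exp 1 ^2 = Real.exp 1 ^2 * 1 := (mul_one _).symm
          _ ≤ Real.exp 1 ^2 * ((2*(k:ℝ)+1)^(k+1+1) * (ρ^(k+1+1))^k) :=
              mul_le_mul_of_nonneg_left u1 (by positivity)
          _ = ((2*(k:ℝ)+1)^(k+1+1) * Real.exp 1 ^2) * (ρ^(k+1+1))^k := by ring
          _ ≤ (32^k * ((k:ℝ)+1)^k) * (ρ^(k+1+1))^k :=
              mul_le_mul_of_nonneg_right u4 (by positivity)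
          _ = 32^k * ((k:ℝ)+1)^k * (ρ^(k+1+1))^k := by ring
      have u2' : (k:ℝ)^k ≤ ((k:ℝ)+1)^k * (1-ρ^k)^k := by
        rw [← mul_pow]; exact u2
      have T' : ((k:ℝ)+1)^(k*(k+1+1)) ≤
          (32^k * Real.exp 1 ^k * ((k:ℝ)^(k+1))^k * (ρ^(k+1+1))^k * (1-ρ^k)^k)
            * ((k:ℝ)+1)^(2*k) := by
        calc ((k:ℝ)+1)^(k*(k+1+1))
            ≤ (k:ℝ)^(k*(k+1+1)) * Real.exp 1 ^(k+1+1) := u3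
          _ = ((k:ℝ)^(k+1))^k * (k:ℝ)^k * (Real.exp 1 ^k * Real.exp 1 ^2) := by
              rw [show k*(k+1+1) = (k+1)*k + k from by ring, pow_add, pow_mul,
                show k+1+1 = k+2 from rfl, pow_add]
              ring
          _ ≤ ((k:ℝ)^(k+1))^k * (((k:ℝ)+1)^k * (1-ρ^k)^k)
                * (Real.exp 1 ^k * (32^k * ((k:ℝ)+1)^k * (ρ^(k+1+1))^k)) := by
              apply mul_le_mul (mul_le_mul_of_nonneg_left u2' (by positivity))
                (mul_le_mul_of_nonneg_left u5 (by positivity)) (by positivity)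
                (mul_nonneg (by positivity) (mul_nonneg (by positivity) hY))
          _ = (32^k * Real.exp 1 ^k * ((k:ℝ)^(k+1))^k * (ρ^(k+1+1))^k * (1-ρ^k)^k)
                * ((k:ℝ)+1)^(2*k) := by ring
      have hsplit : ((k:ℝ)+1)^(k*(k+1+1)) = ((k:ℝ)+1)^(k*k) * ((k:ℝ)+1)^(2*k) := by
        rw [← pow_add]
        congr 1
        ring
      have T2 : ((k:ℝ)+1)^(k*k) ≤
          32^k * Real.exp 1 ^k * ((k:ℝ)^(k+1))^k * (ρ^(k+1+1))^k * (1-ρ^k)^k := by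
        have hpos : (0:ℝ) < ((k:ℝ)+1)^(2*k) := by positivity
        rw [hsplit] at T'
        exact le_of_mul_le_mul_right T' hpos
      apply le_of_pow_le_pow_left₀ (show k ≠ 0 by omega) hBnn
      calc (((k:ℝ)+1)^k)^k = ((k:ℝ)+1)^(k*k) := by rw [← pow_mul]
        _ ≤ 32^k * Real.exp 1 ^k * ((k:ℝ)^(k+1))^k * (ρ^(k+1+1))^k * (1-ρ^k)^k := T2
        _ = (32 * Real.exp 1 * ((k:ℝ)^(k+1) * ρ^(k+1+1) * (1-ρ^k)))^k := by
            simp only [mul_pow]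
            ring
  constructor
  · rw [le_div_iff₀ hD0]
    have h := mul_le_mul_of_nonneg_left core_L
      (show (0:ℝ) ≤ ((k:ℝ)+1) * (n:ℝ)^(k+1) by positivity)
    calc Real.exp 1 * ((k:ℝ)+1) * (n:ℝ)^(k+1) * ((k:ℝ)^(k+1) * ρ^(k+1+1) * (1-ρ^k))
        = ((k:ℝ)+1) * (n:ℝ)^(k+1) * (Real.exp 1 * (k:ℝ)^(k+1) * ρ^(k+1+1) * (1-ρ^k)) := by ring
      _ ≤ ((k:ℝ)+1) * (n:ℝ)^(k+1) * ((k:ℝ)+1)^k := h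
      _ = ((k:ℝ)+1)^(k+1) * (n:ℝ)^(k+1) := by ring
  · rw [div_le_iff₀ hD0]
    have h := mul_le_mul_of_nonneg_left core_U
      (show (0:ℝ) ≤ ((k:ℝ)+1) * (n:ℝ)^(k+1) by positivity)
    calc ((k:ℝ)+1)^(k+1) * (n:ℝ)^(k+1)
        = ((k:ℝ)+1) * (n:ℝ)^(k+1) * ((k:ℝ)+1)^k := by ring
      _ ≤ ((k:ℝ)+1) * (n:ℝ)^(k+1) * (32 * Real.exp 1 * ((k:ℝ)^(k+1) * ρ^(k+1+1) * (1-ρ^k))) := h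
      _ = 32 * Real.exp 1 * ((k:ℝ)+1) * (n:ℝ)^(k+1) * ((k:ℝ)^(k+1) * ρ^(k+1+1) * (1-ρ^k)) := by ring
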